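/- arXiv:1802.04704 — 5 statements merged into one kernel-verified Lean document; each statement's English description precedes it below -/
import Mathlib

section
/- If the nested sequent ∅⊢∅,[Υ1],…,[Υn] (whose root node has empty antecedent and succedent and carries the nestings Υ1,…,Υn) is derivable in NS_mLJ, then the nested sequent ∅⊢∅,[Υi] is derivable in NS_mLJ for some i∈{1,…,n}. -/
/-- Intuitionistic propositional formulas. -/
inductive IForm : Type
  | atom : ℕ → IForm
  | bot  : IForm
  | and  : IForm → IForm → IForm
  | or   : IForm → IForm → IForm
  | imp  : IForm → IForm → IForm

/-- Nested sequents: a tree of two-sided sequents of finite multisets. -/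
inductive NS : Type
  | node : Multiset IForm → Multiset IForm → List NS → NS

/-- A context selecting one node inside a nested sequent; `fill` plugs a
nested sequent into the selected position. -/
inductive NSCtx : Type
  | hole : NSCtx
  | child : Multiset IForm → Multiset IForm → List NS → NSCtx → List NS → NSCtx

def NSCtx.fill : NSCtx → NS → NS
  | .hole, t => t
  | .child Γ Δ L₁ C L₂, t => .node Γ Δ (L₁ ++ C.fill t :: L₂)

/-- Derivability in the nested system `NS_mLJ`, indexed by the height of the
derivation: rules may be applied at any node of the nested sequent. -/
inductive NSDeriv : ℕ → NS → Prop
  | init (C : NSCtx) (Γ Δ : Multiset IForm) (Λ : List NS) (p : ℕ) :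
      NSDeriv 0 (C.fill (.node (IForm.atom p ::ₘ Γ) (IForm.atom p ::ₘ Δ) Λ))
  | botL (C : NSCtx) (Γ Δ : Multiset IForm) (Λ : List NS) :
      NSDeriv 0 (C.fill (.node (IForm.bot ::ₘ Γ) Δ Λ))
  | andL {n : ℕ} (C : NSCtx) (Γ Δ : Multiset IForm) (Λ : List NS) (A B : IForm) :
      NSDeriv n (C.fill (.node (A ::ₘ B ::ₘ Γ) Δ Λ)) →
      NSDeriv (n + 1) (C.fill (.node (A.and B ::ₘ Γ) Δ Λ))
  | andR {n m : ℕ} (C : NSCtx) (Γ Δ : Multiset IForm) (Λ : List NS) (A B : IForm) :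
      NSDeriv n (C.fill (.node Γ (A ::ₘ Δ) Λ)) →
      NSDeriv m (C.fill (.node Γ (B ::ₘ Δ) Λ)) →
      NSDeriv (max n m + 1) (C.fill (.node Γ (A.and B ::ₘ Δ) Λ))
  | orL {n m : ℕ} (C : NSCtx) (Γ Δ : Multiset IForm) (Λ : List NS) (A B : IForm) :
      NSDeriv n (C.fill (.node (A ::ₘ Γ) Δ Λ)) →
      NSDeriv m (C.fill (.node (B ::ₘ Γ) Δ Λ)) →
      NSDeriv (max n m + 1) (C.fill (.node (A.or B ::ₘ Γ) Δ Λ))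
  | orR {n : ℕ} (C : NSCtx) (Γ Δ : Multiset IForm) (Λ : List NS) (A B : IForm) :
      NSDeriv n (C.fill (.node Γ (A ::ₘ B ::ₘ Δ) Λ)) →
      NSDeriv (n + 1) (C.fill (.node Γ (A.or B ::ₘ Δ) Λ))
  | impL {n m : ℕ} (C : NSCtx) (Γ Δ : Multiset IForm) (Λ : List NS) (A B : IForm) :
      NSDeriv n (C.fill (.node (A.imp B ::ₘ Γ) (A ::ₘ Δ) Λ)) →
      NSDeriv m (C.fill (.node (B ::ₘ Γ) Δ Λ)) →
      NSDeriv (max n m + 1) (C.fill (.node (A.imp B ::ₘ Γ) Δ Λ))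
  | impR {n : ℕ} (C : NSCtx) (Γ Δ : Multiset IForm) (Λ : List NS) (A B : IForm) :
      NSDeriv n (C.fill (.node Γ Δ (Λ ++ [NS.node {A} {B} []]))) →
      NSDeriv (n + 1) (C.fill (.node Γ (A.imp B ::ₘ Δ) Λ))
  | lift {n : ℕ} (C : NSCtx) (Γ Δ Γ' Δ' : Multiset IForm) (Λ₁ Λ₂ Λ' : List NS) (A : IForm) :
      NSDeriv n (C.fill (.node (A ::ₘ Γ) Δ (Λ₁ ++ NS.node (A ::ₘ Γ') Δ' Λ' :: Λ₂))) →
      NSDeriv (n + 1) (C.fill (.node (A ::ₘ Γ) Δ (Λ₁ ++ NS.node Γ' Δ' Λ' :: Λ₂)))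

lemma fill_single (C' : NSCtx) (t : NS) :
    (NSCtx.child 0 0 [] C' []).fill t = .node 0 0 [C'.fill t] := rfl

lemma fill_analysis (C : NSCtx) (s : NS) (L : List NS)
    (h : C.fill s = .node 0 0 L)
    (hs : ∀ Λ, s ≠ .node 0 0 Λ) :
    ∃ (C' : NSCtx) (L₁ L₂ : List NS), L = L₁ ++ C'.fill s :: L₂ ∧
      (∀ t : NS, NSCtx.fill C t = .node 0 0 (L₁ ++ C'.fill t :: L₂)) := by
  cases C with
  | hole => exact absurd h (hs _)
  | child Γ Δ L₁ C' L₂ =>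
    simp only [NSCtx.fill, NS.node.injEq] at h
    obtain ⟨hΓ, hΔ, hL⟩ := h
    exact ⟨C', L₁, L₂, hL.symm, fun t => by simp [NSCtx.fill, hΓ, hΔ]⟩

lemma NSmLJ_main (n : ℕ) (S : NS) (h : NSDeriv n S) :
    ∀ L : List NS, S = .node 0 0 L → ∃ G ∈ L, ∃ m, NSDeriv m (.node 0 0 [G]) := by
  induction h with
  | init C Γ Δ Λ p =>
    intro L hL
    obtain ⟨C', L₁, L₂, hL', hfill⟩ := fill_analysis C _ L hL (by simp)
    refine ⟨C'.fill (NS.node (IForm.atom p ::ₘ Γ) (IForm.atom p ::ₘ Δ) Λ), by simp [hL'], 0, ?_⟩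
    simpa [fill_single] using NSDeriv.init (NSCtx.child 0 0 [] C' []) Γ Δ Λ p
  | botL C Γ Δ Λ =>
    intro L hL
    obtain ⟨C', L₁, L₂, hL', hfill⟩ := fill_analysis C _ L hL (by simp)
    refine ⟨C'.fill (NS.node (IForm.bot ::ₘ Γ) Δ Λ), by simp [hL'], 0, ?_⟩
    simpa [fill_single] using NSDeriv.botL (NSCtx.child 0 0 [] C' []) Γ Δ Λ
  | andL C Γ Δ Λ A B _ ih =>
    intro L hL
    obtain ⟨C', L₁, L₂, hL', hfill⟩ := fill_analysis C _ L hL (by simp)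
    obtain ⟨G, hG, m, hm⟩ := ih _ (hfill _)
    rcases (by simpa using hG :
        G ∈ L₁ ∨ G = C'.fill (.node (A ::ₘ B ::ₘ Γ) Δ Λ) ∨ G ∈ L₂) with h1 | h2 | h3
    · exact ⟨G, by simp [hL', h1], m, hm⟩
    · subst h2
      refine ⟨C'.fill (NS.node (A.and B ::ₘ Γ) Δ Λ), by simp [hL'], m + 1, ?_⟩
      simpa [fill_single] using NSDeriv.andL (NSCtx.child 0 0 [] C' []) Γ Δ Λ A B
        (by simpa [fill_single] using hm)
    · exact ⟨G, by simp [hL', h3], m, hm⟩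
  | andR C Γ Δ Λ A B _ _ ih1 ih2 =>
    intro L hL
    obtain ⟨C', L₁, L₂, hL', hfill⟩ := fill_analysis C _ L hL (by simp)
    obtain ⟨G, hG, m, hm⟩ := ih1 _ (hfill _)
    rcases (by simpa using hG :
        G ∈ L₁ ∨ G = C'.fill (.node Γ (A ::ₘ Δ) Λ) ∨ G ∈ L₂) with h1 | h2 | h3
    · exact ⟨G, by simp [hL', h1], m, hm⟩
    · subst h2
      obtain ⟨G2, hG2, m2, hm2⟩ := ih2 _ (hfill _)
      rcases (by simpa using hG2 :
          G2 ∈ L₁ ∨ G2 = C'.fill (.node Γ (B ::ₘ Δ) Λ) ∨ G2 ∈ L₂) with k1 | k2 | k3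
      · exact ⟨G2, by simp [hL', k1], m2, hm2⟩
      · subst k2
        refine ⟨C'.fill (NS.node Γ (A.and B ::ₘ Δ) Λ), by simp [hL'], max m m2 + 1, ?_⟩
        simpa [fill_single] using NSDeriv.andR (NSCtx.child 0 0 [] C' []) Γ Δ Λ A B
          (by simpa [fill_single] using hm) (by simpa [fill_single] using hm2)
      · exact ⟨G2, by simp [hL', k3], m2, hm2⟩
    · exact ⟨G, by simp [hL', h3], m, hm⟩
  | orL C Γ Δ Λ A B _ _ ih1 ih2 =>
    intro L hL
    obtain ⟨C', L₁, L₂, hL', hfill⟩ := fill_analysis C _ L hL (by simp)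
    obtain ⟨G, hG, m, hm⟩ := ih1 _ (hfill _)
    rcases (by simpa using hG :
        G ∈ L₁ ∨ G = C'.fill (.node (A ::ₘ Γ) Δ Λ) ∨ G ∈ L₂) with h1 | h2 | h3
    · exact ⟨G, by simp [hL', h1], m, hm⟩
    · subst h2
      obtain ⟨G2, hG2, m2, hm2⟩ := ih2 _ (hfill _)
      rcases (by simpa using hG2 :
          G2 ∈ L₁ ∨ G2 = C'.fill (.node (B ::ₘ Γ) Δ Λ) ∨ G2 ∈ L₂) with k1 | k2 | k3
      · exact ⟨G2, by simp [hL', k1], m2, hm2⟩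
      · subst k2
        refine ⟨C'.fill (NS.node (A.or B ::ₘ Γ) Δ Λ), by simp [hL'], max m m2 + 1, ?_⟩
        simpa [fill_single] using NSDeriv.orL (NSCtx.child 0 0 [] C' []) Γ Δ Λ A B
          (by simpa [fill_single] using hm) (by simpa [fill_single] using hm2)
      · exact ⟨G2, by simp [hL', k3], m2, hm2⟩
    · exact ⟨G, by simp [hL', h3], m, hm⟩
  | orR C Γ Δ Λ A B _ ih =>
    intro L hL
    obtain ⟨C', L₁, L₂, hL', hfill⟩ := fill_analysis C _ L hL (by simp)
    obtain ⟨G, hG, m, hm⟩ := ih _ (hfill _)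
    rcases (by simpa using hG :
        G ∈ L₁ ∨ G = C'.fill (.node Γ (A ::ₘ B ::ₘ Δ) Λ) ∨ G ∈ L₂) with h1 | h2 | h3
    · exact ⟨G, by simp [hL', h1], m, hm⟩
    · subst h2
      refine ⟨C'.fill (NS.node Γ (A.or B ::ₘ Δ) Λ), by simp [hL'], m + 1, ?_⟩
      simpa [fill_single] using NSDeriv.orR (NSCtx.child 0 0 [] C' []) Γ Δ Λ A B
        (by simpa [fill_single] using hm)
    · exact ⟨G, by simp [hL', h3], m, hm⟩
  | impL C Γ Δ Λ A B _ _ ih1 ih2 =>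
    intro L hL
    obtain ⟨C', L₁, L₂, hL', hfill⟩ := fill_analysis C _ L hL (by simp)
    obtain ⟨G, hG, m, hm⟩ := ih1 _ (hfill _)
    rcases (by simpa using hG :
        G ∈ L₁ ∨ G = C'.fill (.node (A.imp B ::ₘ Γ) (A ::ₘ Δ) Λ) ∨ G ∈ L₂) with h1 | h2 | h3
    · exact ⟨G, by simp [hL', h1], m, hm⟩
    · subst h2
      obtain ⟨G2, hG2, m2, hm2⟩ := ih2 _ (hfill _)
      rcases (by simpa using hG2 :
          G2 ∈ L₁ ∨ G2 = C'.fill (.node (B ::ₘ Γ) Δ Λ) ∨ G2 ∈ L₂) with k1 | k2 | k3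
      · exact ⟨G2, by simp [hL', k1], m2, hm2⟩
      · subst k2
        refine ⟨C'.fill (NS.node (A.imp B ::ₘ Γ) Δ Λ), by simp [hL'], max m m2 + 1, ?_⟩
        simpa [fill_single] using NSDeriv.impL (NSCtx.child 0 0 [] C' []) Γ Δ Λ A B
          (by simpa [fill_single] using hm) (by simpa [fill_single] using hm2)
      · exact ⟨G2, by simp [hL', k3], m2, hm2⟩
    · exact ⟨G, by simp [hL', h3], m, hm⟩
  | impR C Γ Δ Λ A B _ ih =>
    intro L hL
    obtain ⟨C', L₁, L₂, hL', hfill⟩ := fill_analysis C _ L hL (by simp)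
    obtain ⟨G, hG, m, hm⟩ := ih _ (hfill _)
    rcases (by simpa using hG :
        G ∈ L₁ ∨ G = C'.fill (.node Γ Δ (Λ ++ [NS.node {A} {B} []])) ∨ G ∈ L₂) with h1 | h2 | h3
    · exact ⟨G, by simp [hL', h1], m, hm⟩
    · subst h2
      refine ⟨C'.fill (NS.node Γ (A.imp B ::ₘ Δ) Λ), by simp [hL'], m + 1, ?_⟩
      simpa [fill_single] using NSDeriv.impR (NSCtx.child 0 0 [] C' []) Γ Δ Λ A B
        (by simpa [fill_single] using hm)
    · exact ⟨G, by simp [hL', h3], m, hm⟩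
  | lift C Γ Δ Γ' Δ' Λ₁ Λ₂ Λ' A _ ih =>
    intro L hL
    obtain ⟨C', K₁, K₂, hL', hfill⟩ := fill_analysis C _ L hL (by simp)
    obtain ⟨G, hG, m, hm⟩ := ih _ (hfill _)
    rcases (by simpa using hG :
        G ∈ K₁ ∨ G = C'.fill (.node (A ::ₘ Γ) Δ (Λ₁ ++ NS.node (A ::ₘ Γ') Δ' Λ' :: Λ₂)) ∨ G ∈ K₂)
      with h1 | h2 | h3
    · exact ⟨G, by simp [hL', h1], m, hm⟩
    · subst h2
      refine ⟨C'.fill (NS.node (A ::ₘ Γ) Δ (Λ₁ ++ NS.node Γ' Δ' Λ' :: Λ₂)), by simp [hL'], m + 1, ?_⟩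
      simpa [fill_single] using NSDeriv.lift (NSCtx.child 0 0 [] C' []) Γ Δ Γ' Δ' Λ₁ Λ₂ Λ' A
        (by simpa [fill_single] using hm)
    · exact ⟨G, by simp [hL', h3], m, hm⟩

/-- If the nested sequent `∅ ⊢ ∅, [Υ₁], …, [Υₙ]` is derivable in `NS_mLJ`,
then `∅ ⊢ ∅, [Υᵢ]` is derivable in `NS_mLJ` for some `i ∈ {1,…,n}`. -/
theorem NSmLJ_nesting_disjunction :
    ∀ (L : List NS), (∃ n, NSDeriv n (.node 0 0 L)) →
      ∃ G ∈ L, ∃ n, NSDeriv n (.node 0 0 [G]) := by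
  rintro L ⟨n, h⟩
  exact NSmLJ_main n _ h L rfl
end

section
/- The linear nested system LNS_mLJ and the sequent calculus mLJ are equivalent: a sequent Γ⊢Δ is derivable in mLJ if and only if the one-component linear nested sequent Γ⊢Δ is derivable in LNS_mLJ. -/
/-- The multi-succedent intuitionistic sequent calculus `mLJ`. -/
inductive MLJ : Multiset IForm → Multiset IForm → Prop
  | init (Γ Δ : Multiset IForm) (p : ℕ) :
      MLJ (IForm.atom p ::ₘ Γ) (IForm.atom p ::ₘ Δ)
  | botL (Γ Δ : Multiset IForm) : MLJ (IForm.bot ::ₘ Γ) Δ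
  | andL {Γ Δ : Multiset IForm} {A B : IForm} :
      MLJ (A ::ₘ B ::ₘ Γ) Δ → MLJ (A.and B ::ₘ Γ) Δ
  | andR {Γ Δ : Multiset IForm} {A B : IForm} :
      MLJ Γ (A ::ₘ Δ) → MLJ Γ (B ::ₘ Δ) → MLJ Γ (A.and B ::ₘ Δ)
  | orL {Γ Δ : Multiset IForm} {A B : IForm} :
      MLJ (A ::ₘ Γ) Δ → MLJ (B ::ₘ Γ) Δ → MLJ (A.or B ::ₘ Γ) Δ
  | orR {Γ Δ : Multiset IForm} {A B : IForm} :
      MLJ Γ (A ::ₘ B ::ₘ Δ) → MLJ Γ (A.or B ::ₘ Δ)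
  | impL {Γ Δ : Multiset IForm} {A B : IForm} :
      MLJ (A.imp B ::ₘ Γ) (A ::ₘ Δ) → MLJ (B ::ₘ Γ) Δ → MLJ (A.imp B ::ₘ Γ) Δ
  | impR {Γ Δ : Multiset IForm} {A B : IForm} :
      MLJ (A ::ₘ Γ) {B} → MLJ Γ (A.imp B ::ₘ Δ)

/-- A sequent: a pair of finite multisets of formulas. -/
abbrev ISeq := Multiset IForm × Multiset IForm

/-- Derivability in the linear nested system `LNS_mLJ`.  A linear nested
sequent `G ∥ Γ ⊢ Δ` is represented by the list `G` of its non-final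
components together with its last component `Γ ⊢ Δ`.  All rules act on the
last component (and, for `⊃_R` and `lift`, on the two last components). -/
inductive LNS : List ISeq → Multiset IForm → Multiset IForm → Prop
  | init (G : List ISeq) (Γ Δ : Multiset IForm) (A : IForm) :
      LNS G (A ::ₘ Γ) (A ::ₘ Δ)
  | botL (G : List ISeq) (Γ Δ : Multiset IForm) : LNS G (IForm.bot ::ₘ Γ) Δ
  | andL {G : List ISeq} {Γ Δ : Multiset IForm} {A B : IForm} :
      LNS G (A ::ₘ B ::ₘ Γ) Δ → LNS G (A.and B ::ₘ Γ) Δ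
  | andR {G : List ISeq} {Γ Δ : Multiset IForm} {A B : IForm} :
      LNS G Γ (A ::ₘ Δ) → LNS G Γ (B ::ₘ Δ) → LNS G Γ (A.and B ::ₘ Δ)
  | orL {G : List ISeq} {Γ Δ : Multiset IForm} {A B : IForm} :
      LNS G (A ::ₘ Γ) Δ → LNS G (B ::ₘ Γ) Δ → LNS G (A.or B ::ₘ Γ) Δ
  | orR {G : List ISeq} {Γ Δ : Multiset IForm} {A B : IForm} :
      LNS G Γ (A ::ₘ B ::ₘ Δ) → LNS G Γ (A.or B ::ₘ Δ)
  | impL {G : List ISeq} {Γ Δ : Multiset IForm} {A B : IForm} :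
      LNS G (A.imp B ::ₘ Γ) (A ::ₘ Δ) → LNS G (B ::ₘ Γ) Δ →
      LNS G (A.imp B ::ₘ Γ) Δ
  | impR {G : List ISeq} {Γ Δ : Multiset IForm} {A B : IForm} :
      LNS (G ++ [(Γ, Δ)]) {A} {B} → LNS G Γ (A.imp B ::ₘ Δ)
  | lift {G : List ISeq} {Γ Δ Γ' Δ' : Multiset IForm} {A : IForm} :
      LNS (G ++ [(Γ, Δ)]) (A ::ₘ Γ') Δ' → LNS (G ++ [(A ::ₘ Γ, Δ)]) Γ' Δ'

/-- Generalized identity in mLJ. -/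
lemma mlj_id (A : IForm) : ∀ Γ Δ : Multiset IForm, MLJ (A ::ₘ Γ) (A ::ₘ Δ) := by
  induction A with
  | atom p => intro Γ Δ; exact MLJ.init Γ Δ p
  | bot => intro Γ Δ; exact MLJ.botL Γ _
  | and A B ihA ihB =>
    intro Γ Δ
    apply MLJ.andR
    · apply MLJ.andL
      exact ihA _ _
    · apply MLJ.andL
      have := ihB (A ::ₘ Γ) Δ
      rwa [Multiset.cons_swap] at this
  | or A B ihA ihB =>
    intro Γ Δ
    apply MLJ.orL
    · apply MLJ.orR
      exact ihA _ _
    · apply MLJ.orR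
      have := ihB Γ (A ::ₘ Δ)
      rwa [Multiset.cons_swap] at this
  | imp A B ihA ihB =>
    intro Γ Δ
    apply MLJ.impR
    rw [Multiset.cons_swap]
    apply MLJ.impL
    · have := ihA ((A.imp B) ::ₘ Γ) ({B} : Multiset IForm)
      rwa [Multiset.cons_swap] at this
    · exact ihB _ 0

/-- Sum of the left parts of the history components. -/
def lefts (G : List ISeq) : Multiset IForm := (G.map Prod.fst).sum

lemma lefts_append (G : List ISeq) (Γ Δ : Multiset IForm) :
    lefts (G ++ [(Γ, Δ)]) = lefts G + Γ := by
  simp [lefts]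

/-- Soundness: LNS derivability implies mLJ derivability of the flattening. -/
lemma lns_sound : ∀ {G : List ISeq} {Γ Δ : Multiset IForm},
    LNS G Γ Δ → MLJ (Γ + lefts G) Δ := by
  intro G Γ Δ h
  induction h with
  | init G Γ Δ A =>
    rw [Multiset.cons_add]
    exact mlj_id A _ _
  | botL G Γ Δ =>
    rw [Multiset.cons_add]
    exact MLJ.botL _ _
  | andL h ih =>
    rw [Multiset.cons_add]
    apply MLJ.andL
    rw [← Multiset.cons_add, ← Multiset.cons_add]
    exact ih
  | andR h1 h2 ih1 ih2 => exact MLJ.andR ih1 ih2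
  | orL h1 h2 ih1 ih2 =>
    rw [Multiset.cons_add]
    apply MLJ.orL
    · rw [← Multiset.cons_add]; exact ih1
    · rw [← Multiset.cons_add]; exact ih2
  | orR h ih => exact MLJ.orR ih
  | impL h1 h2 ih1 ih2 =>
    rw [Multiset.cons_add]
    apply MLJ.impL
    · rw [← Multiset.cons_add]; exact ih1
    · rw [← Multiset.cons_add]; exact ih2
  | impR h ih =>
    rename_i G Γ Δ A B
    apply MLJ.impR
    rw [lefts_append] at ih
    have e : ({A} : Multiset IForm) + (lefts G + Γ) = A ::ₘ (Γ + lefts G) := by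
      rw [← Multiset.singleton_add]
      abel
    rwa [e] at ih
  | lift h ih =>
    rename_i G Γ Δ Γ' Δ' A
    rw [lefts_append] at ih ⊢
    have e : (A ::ₘ Γ') + (lefts G + Γ) = Γ' + (lefts G + (A ::ₘ Γ)) := by
      rw [Multiset.cons_add, ← Multiset.singleton_add, ← Multiset.singleton_add]
      abel
    rwa [e] at ih

/-- History weakening for LNS. -/
lemma lns_weaken_hist : ∀ {G : List ISeq} {Γ Δ : Multiset IForm},
    LNS G Γ Δ → ∀ H : List ISeq, LNS (H ++ G) Γ Δ := by
  intro G Γ Δ h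
  induction h with
  | init G Γ Δ A => intro H; exact LNS.init _ _ _ _
  | botL G Γ Δ => intro H; exact LNS.botL _ _ _
  | andL h ih => intro H; exact LNS.andL (ih H)
  | andR h1 h2 ih1 ih2 => intro H; exact LNS.andR (ih1 H) (ih2 H)
  | orL h1 h2 ih1 ih2 => intro H; exact LNS.orL (ih1 H) (ih2 H)
  | orR h ih => intro H; exact LNS.orR (ih H)
  | impL h1 h2 ih1 ih2 => intro H; exact LNS.impL (ih1 H) (ih2 H)
  | impR h ih =>
    intro H
    apply LNS.impR
    have := ih H
    rwa [← List.append_assoc] at this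
  | lift h ih =>
    intro H
    have := LNS.lift (G := H ++ _) (by rw [List.append_assoc]; exact ih H)
    rwa [List.append_assoc] at this

/-- Iterated lift. -/
lemma lns_lift_many (Θ : Multiset IForm) :
    ∀ {G : List ISeq} {Γ Δ Γ' Δ' : Multiset IForm},
    LNS (G ++ [(Γ, Δ)]) (Θ + Γ') Δ' → LNS (G ++ [(Θ + Γ, Δ)]) Γ' Δ' := by
  induction Θ using Multiset.induction with
  | empty => intro G Γ Δ Γ' Δ' h; simpa using h
  | cons a Θ ih =>
    intro G Γ Δ Γ' Δ' h
    have h' : LNS (G ++ [(Γ, Δ)]) (Θ + (a ::ₘ Γ')) Δ' := by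
      have e : (a ::ₘ Θ) + Γ' = Θ + (a ::ₘ Γ') := by
        rw [Multiset.cons_add, ← Multiset.singleton_add, ← Multiset.singleton_add]
        abel
      rwa [e] at h
    have := LNS.lift (ih h')
    have e2 : a ::ₘ (Θ + Γ) = (a ::ₘ Θ) + Γ := by rw [Multiset.cons_add]
    rwa [e2] at this

/-- Completeness: mLJ derivability implies LNS derivability. -/
lemma mlj_to_lns : ∀ {Γ Δ : Multiset IForm}, MLJ Γ Δ → LNS [] Γ Δ := by
  intro Γ Δ h
  induction h with
  | init Γ Δ p => exact LNS.init _ _ _ _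
  | botL Γ Δ => exact LNS.botL _ _ _
  | andL h ih => exact LNS.andL ih
  | andR h1 h2 ih1 ih2 => exact LNS.andR ih1 ih2
  | orL h1 h2 ih1 ih2 => exact LNS.orL ih1 ih2
  | orR h ih => exact LNS.orR ih
  | impL h1 h2 ih1 ih2 => exact LNS.impL ih1 ih2
  | impR h ih =>
    rename_i Γ Δ A B
    apply LNS.impR (G := [])
    have w : LNS [((0 : Multiset IForm), Δ)] (A ::ₘ Γ) {B} :=
      lns_weaken_hist ih [((0 : Multiset IForm), Δ)]
    have w' : LNS ([] ++ [((0 : Multiset IForm), Δ)]) (Γ + {A}) {B} := by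
      have e : A ::ₘ Γ = Γ + {A} := by
        rw [← Multiset.singleton_add]; abel
      rw [← e]; simpa using w
    have := lns_lift_many Γ w'
    simpa using this

/-- `LNS_mLJ` and `mLJ` are equivalent: a sequent `Γ ⊢ Δ` is derivable in
`mLJ` iff the one-component linear nested sequent `Γ ⊢ Δ` is derivable in
`LNS_mLJ`. -/
theorem LNSmLJ_equiv_mLJ :
    ∀ (Γ Δ : Multiset IForm), MLJ Γ Δ ↔ LNS [] Γ Δ := by
  intro Γ Δ
  constructor
  · exact mlj_to_lns
  · intro h
    have := lns_sound h
    simpa [lefts] using this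
end

section
/- The rule lift' is admissible in the labelled calculus G3I: if the sequent R,x≤y,X,y:A⊢Y is derivable in G3I, then the sequent R,x≤y,X,x:A⊢Y is derivable in G3I. -/
/-- Relation sets: multisets of relation terms over state variables. -/
abbrev LRel := Multiset (ℕ × ℕ)

/-- Multisets of labelled formulas `x : A`. -/
abbrev LCtx := Multiset (ℕ × IForm)

/-- The state variables occurring in a relation set. -/
def relVars (R : LRel) : Multiset ℕ := R.map Prod.fst + R.map Prod.snd

/-- The state variables occurring in a multiset of labelled formulas. -/
def labVars (X : LCtx) : Multiset ℕ := X.map Prod.fst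

/-- `y` is fresh for the labelled sequent `R, X ⊢ Y`. -/
def FreshFor (y : ℕ) (R : LRel) (X Y : LCtx) : Prop :=
  y ∉ relVars R ∧ y ∉ labVars X ∧ y ∉ labVars Y

/-- Derivability in the labelled sequent calculus `G3I`; a relation term
`(x, y)` is read as `x ≤ y`. -/
inductive G3I : LRel → LCtx → LCtx → Prop
  | init (R : LRel) (X Y : LCtx) (x y p : ℕ) :
      G3I ((x, y) ::ₘ R) ((x, IForm.atom p) ::ₘ X) ((y, IForm.atom p) ::ₘ Y)
  | botL (R : LRel) (X Y : LCtx) (x : ℕ) : G3I R ((x, IForm.bot) ::ₘ X) Y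
  | andL {R : LRel} {X Y : LCtx} {x : ℕ} {A B : IForm} :
      G3I R ((x, A) ::ₘ (x, B) ::ₘ X) Y → G3I R ((x, A.and B) ::ₘ X) Y
  | andR {R : LRel} {X Y : LCtx} {x : ℕ} {A B : IForm} :
      G3I R X ((x, A) ::ₘ Y) → G3I R X ((x, B) ::ₘ Y) →
      G3I R X ((x, A.and B) ::ₘ Y)
  | orL {R : LRel} {X Y : LCtx} {x : ℕ} {A B : IForm} :
      G3I R ((x, A) ::ₘ X) Y → G3I R ((x, B) ::ₘ X) Y →
      G3I R ((x, A.or B) ::ₘ X) Y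
  | orR {R : LRel} {X Y : LCtx} {x : ℕ} {A B : IForm} :
      G3I R X ((x, A) ::ₘ (x, B) ::ₘ Y) → G3I R X ((x, A.or B) ::ₘ Y)
  | impL {R : LRel} {X Y : LCtx} {x y : ℕ} {A B : IForm} :
      G3I ((x, y) ::ₘ R) ((x, A.imp B) ::ₘ X) ((y, A) ::ₘ Y) →
      G3I ((x, y) ::ₘ R) ((y, B) ::ₘ X) Y →
      G3I ((x, y) ::ₘ R) ((x, A.imp B) ::ₘ X) Y
  | impR {R : LRel} {X Y : LCtx} {x : ℕ} {A B : IForm} (y : ℕ) :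
      y ≠ x → FreshFor y R X Y →
      G3I ((x, y) ::ₘ R) ((y, A) ::ₘ X) ((y, B) ::ₘ Y) →
      G3I R X ((x, IForm.imp A B) ::ₘ Y)
  | ref {R : LRel} {X Y : LCtx} (x : ℕ) :
      G3I ((x, x) ::ₘ R) X Y → G3I R X Y
  | trans {R : LRel} {X Y : LCtx} {x y z : ℕ} :
      G3I ((x, z) ::ₘ (x, y) ::ₘ (y, z) ::ₘ R) X Y →
      G3I ((x, y) ::ₘ (y, z) ::ₘ R) X Y


deriving instance DecidableEq for IForm

section LiftAux

private lemma madd_cons {α : Type*} (a : α) (s t : Multiset α) :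
    s + a ::ₘ t = a ::ₘ (s + t) := by
  rw [add_comm, Multiset.cons_add, add_comm]

private lemma fst_mem_relVars {a b : ℕ} {R : LRel} (h : (a, b) ∈ R) : a ∈ relVars R :=
  Multiset.mem_add.2 (Or.inl (Multiset.mem_map_of_mem _ h))

private lemma snd_mem_relVars {a b : ℕ} {R : LRel} (h : (a, b) ∈ R) : b ∈ relVars R :=
  Multiset.mem_add.2 (Or.inr (Multiset.mem_map_of_mem _ h))

private lemma relVars_cons (a b : ℕ) (R : LRel) :
    relVars ((a, b) ::ₘ R) = a ::ₘ b ::ₘ relVars R := by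
  simp only [relVars, Multiset.map_cons, Multiset.cons_add, madd_cons]
  exact Multiset.cons_swap _ _ _

private lemma mem_relVars_cons {c : ℕ} {p : ℕ × ℕ} {R : LRel} (h : c ∈ relVars R) :
    c ∈ relVars (p ::ₘ R) := by
  obtain ⟨a, b⟩ := p
  rw [relVars_cons]
  exact Multiset.mem_cons_of_mem (Multiset.mem_cons_of_mem h)

private lemma mem_labVars_add {a : ℕ} {X Y : LCtx} :
    a ∈ labVars (X + Y) ↔ a ∈ labVars X ∨ a ∈ labVars Y := by
  simp [labVars]

private lemma eq_of_mem_labVars_map {a x : ℕ} {Z : Multiset IForm}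
    (h : a ∈ labVars (Multiset.map (fun A => (x, A)) Z)) : a = x := by
  simp only [labVars, Multiset.map_map, Function.comp, Multiset.mem_map] at h
  obtain ⟨A, _, hA⟩ := h
  exact hA.symm

/-- Weakening by a relation atom whose variables occur in the relation part. -/
private lemma weaken_rel {R : LRel} {X Y : LCtx} (D : G3I R X Y) :
    ∀ a b : ℕ, a ∈ relVars R → b ∈ relVars R → G3I ((a, b) ::ₘ R) X Y := by
  induction D with
  | init R X Y u v p =>
    intro a b _ _
    rw [Multiset.cons_swap]
    exact G3I.init _ _ _ _ _ _
  | botL R X Y u =>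
    intro a b _ _
    exact G3I.botL _ _ _ _
  | andL h ih =>
    intro a b ha hb
    exact G3I.andL (ih a b ha hb)
  | andR h1 h2 ih1 ih2 =>
    intro a b ha hb
    exact G3I.andR (ih1 a b ha hb) (ih2 a b ha hb)
  | orL h1 h2 ih1 ih2 =>
    intro a b ha hb
    exact G3I.orL (ih1 a b ha hb) (ih2 a b ha hb)
  | orR h ih =>
    intro a b ha hb
    exact G3I.orR (ih a b ha hb)
  | impL h1 h2 ih1 ih2 =>
    intro a b ha hb
    rw [Multiset.cons_swap]
    exact G3I.impL (by rw [Multiset.cons_swap]; exact ih1 a b ha hb)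
      (by rw [Multiset.cons_swap]; exact ih2 a b ha hb)
  | impR w hw hf h ih =>
    intro a b ha hb
    have hwa : w ≠ a := fun e => hf.1 (e ▸ ha)
    have hwb : w ≠ b := fun e => hf.1 (e ▸ hb)
    refine G3I.impR w hw ⟨?_, hf.2.1, hf.2.2⟩ ?_
    · rw [relVars_cons]
      intro hmem
      rcases Multiset.mem_cons.1 hmem with h' | hmem
      · exact hwa h'
      rcases Multiset.mem_cons.1 hmem with h' | hmem
      · exact hwb h'
      · exact hf.1 hmem
    · rw [Multiset.cons_swap]
      exact ih a b (mem_relVars_cons ha) (mem_relVars_cons hb)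
  | ref u h ih =>
    intro a b ha hb
    refine G3I.ref u ?_
    rw [Multiset.cons_swap]
    exact ih a b (mem_relVars_cons ha) (mem_relVars_cons hb)
  | @trans R' X' Y' u v t h ih =>
    intro a b ha hb
    have goal_eq : (a, b) ::ₘ (u, v) ::ₘ (v, t) ::ₘ R'
        = (u, v) ::ₘ (v, t) ::ₘ (a, b) ::ₘ R' := by
      rw [Multiset.cons_swap (a, b) (u, v)]
      congr 1
      rw [Multiset.cons_swap (a, b) (v, t)]
    rw [goal_eq]
    apply G3I.trans
    have prem_eq : (u, t) ::ₘ (u, v) ::ₘ (v, t) ::ₘ (a, b) ::ₘ R'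
        = (a, b) ::ₘ (u, t) ::ₘ (u, v) ::ₘ (v, t) ::ₘ R' := by
      rw [Multiset.cons_swap (a, b) (u, t)]
      congr 1
      rw [Multiset.cons_swap (a, b) (u, v)]
      congr 1
      rw [Multiset.cons_swap (a, b) (v, t)]
    rw [prem_eq]
    exact ih a b (mem_relVars_cons ha) (mem_relVars_cons hb)

/-- Transitivity at arbitrary (distinct) members of the relation part. -/
private lemma trans_mem {R : LRel} {X Y : LCtx} {u v t : ℕ}
    (h1 : (u, v) ∈ R) (h2 : (v, t) ∈ R) (hne : (u, v) ≠ (v, t))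
    (D : G3I ((u, t) ::ₘ R) X Y) : G3I R X Y := by
  have h2' : (v, t) ∈ R.erase (u, v) := (Multiset.mem_erase_of_ne (Ne.symm hne)).2 h2
  have hR : R = (u, v) ::ₘ (v, t) ::ₘ (R.erase (u, v)).erase (v, t) := by
    rw [Multiset.cons_erase h2', Multiset.cons_erase h1]
  rw [hR]
  exact G3I.trans (by rw [← hR]; exact D)

/-- Decomposition of a cons against a lifted-multiset decomposition. -/
private lemma decomp {y z : ℕ} {A' : IForm} {X₁ X₀ : LCtx} {Z : Multiset IForm}
    (h : (z, A') ::ₘ X₁ = Z.map (fun A => (y, A)) + X₀) :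
    (∃ X₀', X₀ = (z, A') ::ₘ X₀' ∧ X₁ = Z.map (fun A => (y, A)) + X₀') ∨
    (∃ Z', Z = A' ::ₘ Z' ∧ z = y ∧ X₁ = Z'.map (fun A => (y, A)) + X₀) := by
  have hm : (z, A') ∈ Z.map (fun A => (y, A)) + X₀ := by
    rw [← h]; exact Multiset.mem_cons_self _ _
  rcases Multiset.mem_add.1 hm with hm | hm
  · right
    rcases Multiset.mem_map.1 hm with ⟨A, hA, hAe⟩
    have hzy : z = y := (congrArg Prod.fst hAe).symm
    have hAA : A = A' := congrArg Prod.snd hAe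
    subst hzy; subst hAA
    refine ⟨Z.erase A, (Multiset.cons_erase hA).symm, rfl, ?_⟩
    have h2 : (z, A) ::ₘ X₁
        = (z, A) ::ₘ ((Z.erase A).map (fun B => (z, B)) + X₀) := by
      rw [h]
      conv_lhs => rw [show Z = A ::ₘ Z.erase A from (Multiset.cons_erase hA).symm]
      rw [Multiset.map_cons, Multiset.cons_add]
    exact (Multiset.cons_inj_right _).1 h2
  · left
    refine ⟨X₀.erase (z, A'), (Multiset.cons_erase hm).symm, ?_⟩
    have h2 : (z, A') ::ₘ X₁
        = (z, A') ::ₘ (Z.map (fun A => (y, A)) + X₀.erase (z, A')) := by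
      rw [h]
      conv_lhs =>
        rw [show X₀ = (z, A') ::ₘ X₀.erase (z, A') from (Multiset.cons_erase hm).symm]
      rw [madd_cons]
    exact (Multiset.cons_inj_right _).1 h2

/-- Main lemma: simultaneously lift a multiset `Z` of formulas labelled `y`
down to the label `x`, given `x ≤ y` in the relation part. -/
private lemma lift_many {x y : ℕ} (hxy : x ≠ y) {R : LRel} {X Y : LCtx} (D : G3I R X Y) :
    ∀ (Z : Multiset IForm) (X₀ : LCtx), (x, y) ∈ R →
      X = Z.map (fun A => (y, A)) + X₀ →
      G3I R (Z.map (fun A => (x, A)) + X₀) Y := by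
  induction D with
  | init R₀ X₁ Y₁ u v p =>
    intro Z X₀ hmem hX
    rcases decomp hX with ⟨X₀', rfl, _⟩ | ⟨Z', rfl, rfl, _⟩
    · rw [madd_cons]
      exact G3I.init _ _ _ _ _ _
    · rw [Multiset.map_cons, Multiset.cons_add]
      refine trans_mem hmem (Multiset.mem_cons_self _ _)
        (fun h => hxy (congrArg Prod.fst h)) ?_
      exact G3I.init _ _ _ _ _ _
  | botL R₀ X₁ Y₁ u =>
    intro Z X₀ hmem hX
    rcases decomp hX with ⟨X₀', rfl, _⟩ | ⟨Z', rfl, rfl, _⟩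
    · rw [madd_cons]
      exact G3I.botL _ _ _ _
    · rw [Multiset.map_cons, Multiset.cons_add]
      exact G3I.botL _ _ _ _
  | @andL R₀ X₁ Y₁ u A B h ih =>
    intro Z X₀ hmem hX
    rcases decomp hX with ⟨X₀', rfl, hX₁⟩ | ⟨Z', rfl, rfl, hX₁⟩
    · rw [madd_cons]
      apply G3I.andL
      have := ih Z (_ ::ₘ _ ::ₘ X₀') hmem (by rw [hX₁, madd_cons, madd_cons])
      rwa [madd_cons, madd_cons] at this
    · rw [Multiset.map_cons, Multiset.cons_add]
      apply G3I.andL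
      have := ih (A ::ₘ B ::ₘ Z') X₀ hmem
        (by rw [hX₁]; simp [Multiset.cons_add])
      simpa [Multiset.cons_add] using this
  | andR h1 h2 ih1 ih2 =>
    intro Z X₀ hmem hX
    exact G3I.andR (ih1 Z X₀ hmem hX) (ih2 Z X₀ hmem hX)
  | @orL R₀ X₁ Y₁ u A B h1 h2 ih1 ih2 =>
    intro Z X₀ hmem hX
    rcases decomp hX with ⟨X₀', rfl, hX₁⟩ | ⟨Z', rfl, rfl, hX₁⟩
    · rw [madd_cons]
      apply G3I.orL
      · have := ih1 Z (_ ::ₘ X₀') hmem (by rw [hX₁, madd_cons])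
        rwa [madd_cons] at this
      · have := ih2 Z (_ ::ₘ X₀') hmem (by rw [hX₁, madd_cons])
        rwa [madd_cons] at this
    · rw [Multiset.map_cons, Multiset.cons_add]
      apply G3I.orL
      · have := ih1 (A ::ₘ Z') X₀ hmem
          (by rw [hX₁]; simp [Multiset.cons_add])
        simpa [Multiset.cons_add] using this
      · have := ih2 (B ::ₘ Z') X₀ hmem
          (by rw [hX₁]; simp [Multiset.cons_add])
        simpa [Multiset.cons_add] using this
  | orR h ih =>
    intro Z X₀ hmem hX
    exact G3I.orR (ih Z X₀ hmem hX)
  | @impL R₀ X₁ Y₁ u v A B h1 h2 ih1 ih2 =>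
    intro Z X₀ hmem hX
    rcases decomp hX with ⟨X₀', rfl, hX₁⟩ | ⟨Z', rfl, rfl, hX₁⟩
    · rw [madd_cons]
      apply G3I.impL
      · have := ih1 Z (_ ::ₘ X₀') hmem (by rw [hX₁, madd_cons])
        rwa [madd_cons] at this
      · have := ih2 Z (_ ::ₘ X₀') hmem (by rw [hX₁, madd_cons])
        rwa [madd_cons] at this
    · rw [Multiset.map_cons, Multiset.cons_add]
      refine trans_mem hmem (Multiset.mem_cons_self _ _)
        (fun h => hxy (congrArg Prod.fst h)) ?_
      apply G3I.impL
      · have E1 := ih1 ((A.imp B) ::ₘ Z') X₀ hmem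
          (by rw [hX₁, Multiset.map_cons, Multiset.cons_add])
        have E1' := weaken_rel E1 x v (fst_mem_relVars hmem)
          (snd_mem_relVars (Multiset.mem_cons_self _ _))
        rwa [Multiset.map_cons, Multiset.cons_add] at E1'
      · have E2 := ih2 Z' (_ ::ₘ X₀) hmem (by rw [hX₁, madd_cons])
        have E2' := weaken_rel E2 x v (fst_mem_relVars hmem)
          (snd_mem_relVars (Multiset.mem_cons_self _ _))
        rwa [madd_cons] at E2'
  | impR w hw hf h ih =>
    intro Z X₀ hmem hX
    have hwx : w ≠ x := fun e => hf.1 (e ▸ fst_mem_relVars hmem)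
    refine G3I.impR w hw ⟨hf.1, ?_, hf.2.2⟩ ?_
    · intro hmem'
      rcases mem_labVars_add.1 hmem' with h' | h'
      · exact hwx (eq_of_mem_labVars_map h')
      · refine hf.2.1 ?_
        rw [hX]
        exact mem_labVars_add.2 (Or.inr h')
    · have := ih Z (_ ::ₘ X₀) (Multiset.mem_cons_of_mem hmem) (by rw [hX, madd_cons])
      rwa [madd_cons] at this
  | ref u h ih =>
    intro Z X₀ hmem hX
    exact G3I.ref u (ih Z X₀ (Multiset.mem_cons_of_mem hmem) hX)
  | trans h ih =>
    intro Z X₀ hmem hX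
    exact G3I.trans (ih Z X₀ (Multiset.mem_cons_of_mem hmem) hX)

end LiftAux

/-- The rule `lift'` is admissible in `G3I`: if `R, x≤y, X, y:A ⊢ Y` is
derivable in `G3I`, then `R, x≤y, X, x:A ⊢ Y` is derivable in `G3I`. -/
theorem G3I_lift'_admissible :
    ∀ (R : LRel) (X Y : LCtx) (x y : ℕ) (A : IForm),
      G3I ((x, y) ::ₘ R) ((y, A) ::ₘ X) Y →
      G3I ((x, y) ::ₘ R) ((x, A) ::ₘ X) Y := by
  intro R X Y x y A D
  by_cases hxy : x = y
  · subst hxy; exact D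
  · have := lift_many hxy D {A} X (Multiset.mem_cons_self _ _)
      (by rw [Multiset.map_singleton, Multiset.singleton_add])
    rwa [Multiset.map_singleton, Multiset.singleton_add] at this
end

section
/- If the indexed nested sequent ∅⊢∅,[Υ1]^{i1},…,[Υn]^{in} (whose root node has empty antecedent and succedent and carries the indexed nestings [Υ1]^{i1},…,[Υn]^{in}) is derivable in NS_(N,⪯,F), then the indexed nested sequent ∅⊢∅,[Υk]^{ik} is derivable in NS_(N,⪯,F) for some k∈{1,…,n}. -/
/-- The modal axioms D, T and 4. -/
inductive MAx : Type
  | d | t | four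
  deriving DecidableEq

/-- A description `(N, ⪯, F)` of a simply dependent multimodal logic:
`N` is a finite set of natural numbers, `⪯` (written `le`) is a partial order
on `N`, and `F` maps each index to a subset of `{D, T, 4}`; the description is
transitive-closed. -/
structure SDM where
  N : Finset ℕ
  le : ℕ → ℕ → Prop
  F : ℕ → Finset MAx
  le_refl : ∀ i ∈ N, le i i
  le_trans : ∀ i ∈ N, ∀ j ∈ N, ∀ k ∈ N, le i j → le j k → le i k
  le_antisymm : ∀ i ∈ N, ∀ j ∈ N, le i j → le j i → i = j
  transClosed : ∀ i ∈ N, ∀ j ∈ N, le j i → MAx.four ∈ F j → MAx.four ∈ F i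

/-- Classical propositional formulas extended with modalities `□_i`. -/
inductive MForm : Type
  | atom : ℕ → MForm
  | bot  : MForm
  | and  : MForm → MForm → MForm
  | or   : MForm → MForm → MForm
  | imp  : MForm → MForm → MForm
  | box  : ℕ → MForm → MForm

/-- Indexed nested sequents: trees of two-sided sequents of finite multisets
in which every nesting carries an index. -/
inductive INS : Type
  | node : Multiset MForm → Multiset MForm → List (ℕ × INS) → INS

/-- A context selecting one node inside an indexed nested sequent. -/
inductive ICtx : Type
  | hole : ICtx
  | child : Multiset MForm → Multiset MForm → List (ℕ × INS) → ℕ → ICtx →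
      List (ℕ × INS) → ICtx

def ICtx.fill : ICtx → INS → INS
  | .hole, t => t
  | .child Γ Δ L₁ i C L₂, t => .node Γ Δ (L₁ ++ (i, C.fill t) :: L₂)

/-- Derivability in the indexed nested system `NS_(N,⪯,F)`, indexed by the
height of the derivation; rules may be applied at any node. -/
inductive INSDeriv (D : SDM) : ℕ → INS → Prop
  | init (C : ICtx) (Γ Δ : Multiset MForm) (Λ : List (ℕ × INS)) (p : ℕ) :
      INSDeriv D 0 (C.fill (.node (MForm.atom p ::ₘ Γ) (MForm.atom p ::ₘ Δ) Λ))
  | botL (C : ICtx) (Γ Δ : Multiset MForm) (Λ : List (ℕ × INS)) :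
      INSDeriv D 0 (C.fill (.node (MForm.bot ::ₘ Γ) Δ Λ))
  | andL {n : ℕ} (C : ICtx) (Γ Δ : Multiset MForm) (Λ : List (ℕ × INS)) (A B : MForm) :
      INSDeriv D n (C.fill (.node (A ::ₘ B ::ₘ Γ) Δ Λ)) →
      INSDeriv D (n + 1) (C.fill (.node (A.and B ::ₘ Γ) Δ Λ))
  | andR {n m : ℕ} (C : ICtx) (Γ Δ : Multiset MForm) (Λ : List (ℕ × INS)) (A B : MForm) :
      INSDeriv D n (C.fill (.node Γ (A ::ₘ Δ) Λ)) →
      INSDeriv D m (C.fill (.node Γ (B ::ₘ Δ) Λ)) →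
      INSDeriv D (max n m + 1) (C.fill (.node Γ (A.and B ::ₘ Δ) Λ))
  | orL {n m : ℕ} (C : ICtx) (Γ Δ : Multiset MForm) (Λ : List (ℕ × INS)) (A B : MForm) :
      INSDeriv D n (C.fill (.node (A ::ₘ Γ) Δ Λ)) →
      INSDeriv D m (C.fill (.node (B ::ₘ Γ) Δ Λ)) →
      INSDeriv D (max n m + 1) (C.fill (.node (A.or B ::ₘ Γ) Δ Λ))
  | orR {n : ℕ} (C : ICtx) (Γ Δ : Multiset MForm) (Λ : List (ℕ × INS)) (A B : MForm) :
      INSDeriv D n (C.fill (.node Γ (A ::ₘ B ::ₘ Δ) Λ)) →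
      INSDeriv D (n + 1) (C.fill (.node Γ (A.or B ::ₘ Δ) Λ))
  | impL {n m : ℕ} (C : ICtx) (Γ Δ : Multiset MForm) (Λ : List (ℕ × INS)) (A B : MForm) :
      INSDeriv D n (C.fill (.node Γ (A ::ₘ Δ) Λ)) →
      INSDeriv D m (C.fill (.node (B ::ₘ Γ) Δ Λ)) →
      INSDeriv D (max n m + 1) (C.fill (.node (A.imp B ::ₘ Γ) Δ Λ))
  | impR {n : ℕ} (C : ICtx) (Γ Δ : Multiset MForm) (Λ : List (ℕ × INS)) (A B : MForm) :
      INSDeriv D n (C.fill (.node (A ::ₘ Γ) (B ::ₘ Δ) Λ)) →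
      INSDeriv D (n + 1) (C.fill (.node Γ (A.imp B ::ₘ Δ) Λ))
  | boxR {n : ℕ} (C : ICtx) (Γ Δ : Multiset MForm) (Λ : List (ℕ × INS)) (i : ℕ) (A : MForm) :
      i ∈ D.N →
      INSDeriv D n (C.fill (.node Γ Δ (Λ ++ [(i, INS.node 0 {A} [])]))) →
      INSDeriv D (n + 1) (C.fill (.node Γ (MForm.box i A ::ₘ Δ) Λ))
  | boxL {n : ℕ} (C : ICtx) (Γ Δ S P : Multiset MForm)
      (Λ₁ Λ₂ Λ' : List (ℕ × INS)) (i j : ℕ) (A : MForm) :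
      i ∈ D.N → j ∈ D.N → D.le j i →
      INSDeriv D n (C.fill (.node (MForm.box i A ::ₘ Γ) Δ
        (Λ₁ ++ (j, INS.node (A ::ₘ S) P Λ') :: Λ₂))) →
      INSDeriv D (n + 1) (C.fill (.node (MForm.box i A ::ₘ Γ) Δ
        (Λ₁ ++ (j, INS.node S P Λ') :: Λ₂)))
  | dRule {n : ℕ} (C : ICtx) (Γ Δ : Multiset MForm) (Λ : List (ℕ × INS)) (i j : ℕ) (A : MForm) :
      i ∈ D.N → j ∈ D.N → D.le j i → MAx.d ∈ D.F i →
      INSDeriv D n (C.fill (.node (MForm.box i A ::ₘ Γ) Δ (Λ ++ [(j, INS.node {A} 0 [])]))) →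
      INSDeriv D (n + 1) (C.fill (.node (MForm.box i A ::ₘ Γ) Δ Λ))
  | tRule {n : ℕ} (C : ICtx) (Γ Δ : Multiset MForm) (Λ : List (ℕ × INS)) (i : ℕ) (A : MForm) :
      i ∈ D.N → MAx.t ∈ D.F i →
      INSDeriv D n (C.fill (.node (MForm.box i A ::ₘ A ::ₘ Γ) Δ Λ)) →
      INSDeriv D (n + 1) (C.fill (.node (MForm.box i A ::ₘ Γ) Δ Λ))
  | fourRule {n : ℕ} (C : ICtx) (Γ Δ S P : Multiset MForm)
      (Λ₁ Λ₂ Λ' : List (ℕ × INS)) (i j : ℕ) (A : MForm) :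
      i ∈ D.N → j ∈ D.N → D.le j i → MAx.four ∈ D.F i →
      INSDeriv D n (C.fill (.node (MForm.box i A ::ₘ Γ) Δ
        (Λ₁ ++ (j, INS.node (MForm.box i A ::ₘ S) P Λ') :: Λ₂))) →
      INSDeriv D (n + 1) (C.fill (.node (MForm.box i A ::ₘ Γ) Δ
        (Λ₁ ++ (j, INS.node S P Λ') :: Λ₂)))

lemma fill_eq_root {C : ICtx} {t : INS} {L : List (ℕ × INS)}
    (h : C.fill t = INS.node 0 0 L) :
    (C = .hole ∧ t = .node 0 0 L) ∨
      ∃ L₁ k C' L₂, C = ICtx.child 0 0 L₁ k C' L₂ ∧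
        L = L₁ ++ (k, C'.fill t) :: L₂ := by
  cases C with
  | hole => exact Or.inl ⟨rfl, h⟩
  | child Γ Δ L₁ k C' L₂ =>
    simp only [ICtx.fill, INS.node.injEq] at h
    obtain ⟨hΓ, hΔ, hL⟩ := h
    exact Or.inr ⟨L₁, k, C', L₂, by rw [hΓ, hΔ], hL.symm⟩

lemma mid_step {D : SDM} {L₁ L₂ : List (ℕ × INS)} {k : ℕ} {C' : ICtx} {s s' : INS}
    (rule : ∀ C : ICtx, (∃ m, INSDeriv D m (C.fill s')) → ∃ m, INSDeriv D m (C.fill s))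
    (IH : ∃ G ∈ L₁ ++ (k, C'.fill s') :: L₂, ∃ m, INSDeriv D m (.node 0 0 [G])) :
    ∃ G ∈ L₁ ++ (k, C'.fill s) :: L₂, ∃ m, INSDeriv D m (.node 0 0 [G]) := by
  obtain ⟨G, hG, hd⟩ := IH
  rcases List.mem_append.1 hG with h1 | h2
  · exact ⟨G, List.mem_append.2 (Or.inl h1), hd⟩
  · rcases List.mem_cons.1 h2 with h2 | h2
    · subst h2
      exact ⟨(k, C'.fill s), List.mem_append.2 (Or.inr (List.mem_cons_self)),
        rule (ICtx.child 0 0 [] k C' []) hd⟩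
    · exact ⟨G, List.mem_append.2 (Or.inr (List.mem_cons_of_mem _ h2)), hd⟩

lemma mid_step2 {D : SDM} {L₁ L₂ : List (ℕ × INS)} {k : ℕ} {C' : ICtx} {s s₁ s₂ : INS}
    (rule : ∀ C : ICtx, (∃ m, INSDeriv D m (C.fill s₁)) → (∃ m, INSDeriv D m (C.fill s₂)) →
      ∃ m, INSDeriv D m (C.fill s))
    (IH1 : ∃ G ∈ L₁ ++ (k, C'.fill s₁) :: L₂, ∃ m, INSDeriv D m (.node 0 0 [G]))
    (IH2 : ∃ G ∈ L₁ ++ (k, C'.fill s₂) :: L₂, ∃ m, INSDeriv D m (.node 0 0 [G])) :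
    ∃ G ∈ L₁ ++ (k, C'.fill s) :: L₂, ∃ m, INSDeriv D m (.node 0 0 [G]) := by
  obtain ⟨G, hG, hd⟩ := IH1
  rcases List.mem_append.1 hG with h1 | h2
  · exact ⟨G, List.mem_append.2 (Or.inl h1), hd⟩
  · rcases List.mem_cons.1 h2 with h2 | h2
    · obtain ⟨G2, hG2, hd2⟩ := IH2
      rcases List.mem_append.1 hG2 with g1 | g2
      · exact ⟨G2, List.mem_append.2 (Or.inl g1), hd2⟩
      · rcases List.mem_cons.1 g2 with g2 | g2
        · subst h2; subst g2
          exact ⟨(k, C'.fill s), List.mem_append.2 (Or.inr (List.mem_cons_self)),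
            rule (ICtx.child 0 0 [] k C' []) hd hd2⟩
        · exact ⟨G2, List.mem_append.2 (Or.inr (List.mem_cons_of_mem _ g2)), hd2⟩
    · exact ⟨G, List.mem_append.2 (Or.inr (List.mem_cons_of_mem _ h2)), hd⟩

lemma mid_step0 {D : SDM} (L₁ L₂ : List (ℕ × INS)) (k : ℕ) (C' : ICtx) (s : INS)
    (rule : ∀ C : ICtx, ∃ m, INSDeriv D m (C.fill s)) :
    ∃ G ∈ L₁ ++ (k, C'.fill s) :: L₂, ∃ m, INSDeriv D m (.node 0 0 [G]) :=
  ⟨(k, C'.fill s), List.mem_append.2 (Or.inr (List.mem_cons_self)),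
    rule (ICtx.child 0 0 [] k C' [])⟩

theorem INS_aux : ∀ (n : ℕ) (D : SDM) (L : List (ℕ × INS)), INSDeriv D n (.node 0 0 L) →
    ∃ G ∈ L, ∃ m, INSDeriv D m (.node 0 0 [G]) := by
  intro n
  induction n using Nat.strong_induction_on with
  | _ n IH =>
  intro D L h
  obtain ⟨S, hS, h⟩ : ∃ S, S = INS.node 0 0 L ∧ INSDeriv D n S := ⟨_, rfl, h⟩
  cases h with
  | init C Γ Δ Λ p =>
    rcases fill_eq_root hS with ⟨hC, ht⟩ | ⟨L₁, k, C', L₂, hC, hL⟩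
    · injection ht with h1 h2 h3; exact absurd h1 (by simp)
    · subst hL
      exact mid_step0 L₁ L₂ k C' _ (fun C => ⟨0, INSDeriv.init C Γ Δ Λ p⟩)
  | botL C Γ Δ Λ =>
    rcases fill_eq_root hS with ⟨hC, ht⟩ | ⟨L₁, k, C', L₂, hC, hL⟩
    · injection ht with h1 h2 h3; exact absurd h1 (by simp)
    · subst hL
      exact mid_step0 L₁ L₂ k C' _ (fun C => ⟨0, INSDeriv.botL C Γ Δ Λ⟩)
  | andL C Γ Δ Λ A B prem =>
    rcases fill_eq_root hS with ⟨hC, ht⟩ | ⟨L₁, k, C', L₂, hC, hL⟩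
    · injection ht with h1 h2 h3; exact absurd h1 (by simp)
    · subst hC hL
      exact mid_step (fun C ⟨m, hm⟩ => ⟨m + 1, INSDeriv.andL C Γ Δ Λ A B hm⟩)
        (IH _ (by omega) D _ prem)
  | andR C Γ Δ Λ A B prem1 prem2 =>
    rcases fill_eq_root hS with ⟨hC, ht⟩ | ⟨L₁, k, C', L₂, hC, hL⟩
    · injection ht with h1 h2 h3; exact absurd h2 (by simp)
    · subst hC hL
      exact mid_step2 (fun C ⟨m, hm⟩ ⟨m', hm'⟩ => ⟨_, INSDeriv.andR C Γ Δ Λ A B hm hm'⟩)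
        (IH _ (by omega) D _ prem1) (IH _ (by omega) D _ prem2)
  | orL C Γ Δ Λ A B prem1 prem2 =>
    rcases fill_eq_root hS with ⟨hC, ht⟩ | ⟨L₁, k, C', L₂, hC, hL⟩
    · injection ht with h1 h2 h3; exact absurd h1 (by simp)
    · subst hC hL
      exact mid_step2 (fun C ⟨m, hm⟩ ⟨m', hm'⟩ => ⟨_, INSDeriv.orL C Γ Δ Λ A B hm hm'⟩)
        (IH _ (by omega) D _ prem1) (IH _ (by omega) D _ prem2)
  | orR C Γ Δ Λ A B prem =>
    rcases fill_eq_root hS with ⟨hC, ht⟩ | ⟨L₁, k, C', L₂, hC, hL⟩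
    · injection ht with h1 h2 h3; exact absurd h2 (by simp)
    · subst hC hL
      exact mid_step (fun C ⟨m, hm⟩ => ⟨m + 1, INSDeriv.orR C Γ Δ Λ A B hm⟩)
        (IH _ (by omega) D _ prem)
  | impL C Γ Δ Λ A B prem1 prem2 =>
    rcases fill_eq_root hS with ⟨hC, ht⟩ | ⟨L₁, k, C', L₂, hC, hL⟩
    · injection ht with h1 h2 h3; exact absurd h1 (by simp)
    · subst hC hL
      exact mid_step2 (fun C ⟨m, hm⟩ ⟨m', hm'⟩ => ⟨_, INSDeriv.impL C Γ Δ Λ A B hm hm'⟩)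
        (IH _ (by omega) D _ prem1) (IH _ (by omega) D _ prem2)
  | impR C Γ Δ Λ A B prem =>
    rcases fill_eq_root hS with ⟨hC, ht⟩ | ⟨L₁, k, C', L₂, hC, hL⟩
    · injection ht with h1 h2 h3; exact absurd h2 (by simp)
    · subst hC hL
      exact mid_step (fun C ⟨m, hm⟩ => ⟨m + 1, INSDeriv.impR C Γ Δ Λ A B hm⟩)
        (IH _ (by omega) D _ prem)
  | boxR C Γ Δ Λ i A hi prem =>
    rcases fill_eq_root hS with ⟨hC, ht⟩ | ⟨L₁, k, C', L₂, hC, hL⟩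
    · injection ht with h1 h2 h3; exact absurd h2 (by simp)
    · subst hC hL
      exact mid_step (fun C ⟨m, hm⟩ => ⟨m + 1, INSDeriv.boxR C Γ Δ Λ i A hi hm⟩)
        (IH _ (by omega) D _ prem)
  | boxL C Γ Δ S' P Λ₁' Λ₂' Λ' i j A hi hj hji prem =>
    rcases fill_eq_root hS with ⟨hC, ht⟩ | ⟨L₁, k, C', L₂, hC, hL⟩
    · injection ht with h1 h2 h3; exact absurd h1 (by simp)
    · subst hC hL
      exact mid_step
        (fun C ⟨m, hm⟩ => ⟨m + 1, INSDeriv.boxL C Γ Δ S' P Λ₁' Λ₂' Λ' i j A hi hj hji hm⟩)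
        (IH _ (by omega) D _ prem)
  | dRule C Γ Δ Λ i j A hi hj hji hd prem =>
    rcases fill_eq_root hS with ⟨hC, ht⟩ | ⟨L₁, k, C', L₂, hC, hL⟩
    · injection ht with h1 h2 h3; exact absurd h1 (by simp)
    · subst hC hL
      exact mid_step (fun C ⟨m, hm⟩ => ⟨m + 1, INSDeriv.dRule C Γ Δ Λ i j A hi hj hji hd hm⟩)
        (IH _ (by omega) D _ prem)
  | tRule C Γ Δ Λ i A hi ht' prem =>
    rcases fill_eq_root hS with ⟨hC, ht⟩ | ⟨L₁, k, C', L₂, hC, hL⟩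
    · injection ht with h1 h2 h3; exact absurd h1 (by simp)
    · subst hC hL
      exact mid_step (fun C ⟨m, hm⟩ => ⟨m + 1, INSDeriv.tRule C Γ Δ Λ i A hi ht' hm⟩)
        (IH _ (by omega) D _ prem)
  | fourRule C Γ Δ S' P Λ₁' Λ₂' Λ' i j A hi hj hji h4 prem =>
    rcases fill_eq_root hS with ⟨hC, ht⟩ | ⟨L₁, k, C', L₂, hC, hL⟩
    · injection ht with h1 h2 h3; exact absurd h1 (by simp)
    · subst hC hL
      exact mid_step
        (fun C ⟨m, hm⟩ => ⟨m + 1, INSDeriv.fourRule C Γ Δ S' P Λ₁' Λ₂' Λ' i j A hi hj hji h4 hm⟩)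
        (IH _ (by omega) D _ prem)

/-- If the indexed nested sequent `∅ ⊢ ∅, [Υ₁]^{i₁}, …, [Υₙ]^{iₙ}` is
derivable in `NS_(N,⪯,F)`, then `∅ ⊢ ∅, [Υₖ]^{iₖ}` is derivable in
`NS_(N,⪯,F)` for some `k ∈ {1,…,n}`. -/
theorem INS_nesting_disjunction :
    ∀ (D : SDM) (L : List (ℕ × INS)), (∃ n, INSDeriv D n (.node 0 0 L)) →
      ∃ G ∈ L, ∃ n, INSDeriv D n (.node 0 0 [G]) := by
  intro D L ⟨n, h⟩
  exact INS_aux n D L h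
end

section
/- For all i,j∈N with j⪯i and 4∈F(i), the rule TL(4_{ij}) is derivable in G3mm: if the sequent R,xR_jy,X,x:□_iA,y:□_iA⊢Y is derivable in G3mm, then the sequent R,xR_jy,X,x:□_iA⊢Y is derivable in G3mm. -/
/-- Indexed relation sets: multisets of indexed relation terms `x R_i y`,
represented as triples `(i, x, y)`. -/
abbrev MRel := Multiset (ℕ × ℕ × ℕ)

/-- Multisets of labelled modal formulas `x : A`. -/
abbrev MCtx := Multiset (ℕ × MForm)

/-- The state variables occurring in an indexed relation set. -/
def mrelVars (R : MRel) : Multiset ℕ := R.map (fun p => p.2.1) + R.map (fun p => p.2.2)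

/-- The state variables occurring in a multiset of labelled formulas. -/
def mlabVars (X : MCtx) : Multiset ℕ := X.map Prod.fst

/-- `y` is fresh for the labelled sequent `R, X ⊢ Y`. -/
def MFreshFor (y : ℕ) (R : MRel) (X Y : MCtx) : Prop :=
  y ∉ mrelVars R ∧ y ∉ mlabVars X ∧ y ∉ mlabVars Y

/-- Derivability in the labelled sequent calculus `G3mm`. -/
inductive G3mm (D : SDM) : MRel → MCtx → MCtx → Prop
  | init (R : MRel) (X Y : MCtx) (x p : ℕ) :
      G3mm D R ((x, MForm.atom p) ::ₘ X) ((x, MForm.atom p) ::ₘ Y)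
  | botL (R : MRel) (X Y : MCtx) (x : ℕ) : G3mm D R ((x, MForm.bot) ::ₘ X) Y
  | andL {R : MRel} {X Y : MCtx} {x : ℕ} {A B : MForm} :
      G3mm D R ((x, A) ::ₘ (x, B) ::ₘ X) Y → G3mm D R ((x, A.and B) ::ₘ X) Y
  | andR {R : MRel} {X Y : MCtx} {x : ℕ} {A B : MForm} :
      G3mm D R X ((x, A) ::ₘ Y) → G3mm D R X ((x, B) ::ₘ Y) →
      G3mm D R X ((x, A.and B) ::ₘ Y)
  | orL {R : MRel} {X Y : MCtx} {x : ℕ} {A B : MForm} :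
      G3mm D R ((x, A) ::ₘ X) Y → G3mm D R ((x, B) ::ₘ X) Y →
      G3mm D R ((x, A.or B) ::ₘ X) Y
  | orR {R : MRel} {X Y : MCtx} {x : ℕ} {A B : MForm} :
      G3mm D R X ((x, A) ::ₘ (x, B) ::ₘ Y) → G3mm D R X ((x, A.or B) ::ₘ Y)
  | impL {R : MRel} {X Y : MCtx} {x : ℕ} {A B : MForm} :
      G3mm D R X ((x, A) ::ₘ Y) → G3mm D R ((x, B) ::ₘ X) Y →
      G3mm D R ((x, A.imp B) ::ₘ X) Y
  | impR {R : MRel} {X Y : MCtx} {x : ℕ} {A B : MForm} :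
      G3mm D R ((x, A) ::ₘ X) ((x, B) ::ₘ Y) → G3mm D R X ((x, A.imp B) ::ₘ Y)
  | boxL {R : MRel} {X Y : MCtx} {x y i : ℕ} {A : MForm} :
      i ∈ D.N →
      G3mm D ((i, x, y) ::ₘ R) ((x, MForm.box i A) ::ₘ (y, A) ::ₘ X) Y →
      G3mm D ((i, x, y) ::ₘ R) ((x, MForm.box i A) ::ₘ X) Y
  | boxR {R : MRel} {X Y : MCtx} {x i : ℕ} {A : MForm} (y : ℕ) :
      i ∈ D.N → y ≠ x → MFreshFor y R X Y →
      G3mm D ((i, x, y) ::ₘ R) X ((y, A) ::ₘ Y) →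
      G3mm D R X ((x, MForm.box i A) ::ₘ Y)
  | refl {R : MRel} {X Y : MCtx} (i x : ℕ) :
      i ∈ D.N → MAx.t ∈ D.F i →
      G3mm D ((i, x, x) ::ₘ R) X Y → G3mm D R X Y
  | trans {R : MRel} {X Y : MCtx} {i x y z : ℕ} :
      i ∈ D.N → MAx.four ∈ D.F i →
      G3mm D ((i, x, z) ::ₘ (i, x, y) ::ₘ (i, y, z) ::ₘ R) X Y →
      G3mm D ((i, x, y) ::ₘ (i, y, z) ::ₘ R) X Y
  | ser {R : MRel} {X Y : MCtx} (i x : ℕ) (y : ℕ) :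
      i ∈ D.N → MAx.d ∈ D.F i → y ≠ x → MFreshFor y R X Y →
      G3mm D ((i, x, y) ::ₘ R) X Y → G3mm D R X Y
  | int {R : MRel} {X Y : MCtx} {i j x y : ℕ} :
      i ∈ D.N → j ∈ D.N → D.le j i →
      G3mm D ((j, x, y) ::ₘ (i, x, y) ::ₘ R) X Y →
      G3mm D ((j, x, y) ::ₘ R) X Y

deriving instance DecidableEq for MForm

namespace TLfour

lemma mlab_mem {v x : ℕ} {A : MForm} {X : MCtx} :
    v ∈ mlabVars ((x, A) ::ₘ X) ↔ v = x ∨ v ∈ mlabVars X := by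
  simp [mlabVars]

lemma mrel_mem {v i a b : ℕ} {R : MRel} :
    v ∈ mrelVars ((i, a, b) ::ₘ R) ↔ v = a ∨ v = b ∨ v ∈ mrelVars R := by
  simp only [mrelVars, Multiset.map_cons, Multiset.mem_add, Multiset.mem_cons]
  tauto

lemma mlab_of_mem {x : ℕ} {A : MForm} {X : MCtx} (h : (x, A) ∈ X) : x ∈ mlabVars X := by
  simp only [mlabVars, Multiset.mem_map]
  exact ⟨(x, A), h, rfl⟩

lemma mrel_fst_of_mem {i a b : ℕ} {R : MRel} (h : (i, a, b) ∈ R) : a ∈ mrelVars R := by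
  simp only [mrelVars, Multiset.mem_add, Multiset.mem_map]
  exact Or.inl ⟨(i, a, b), h, rfl⟩

lemma mrel_snd_of_mem {i a b : ℕ} {R : MRel} (h : (i, a, b) ∈ R) : b ∈ mrelVars R := by
  simp only [mrelVars, Multiset.mem_add, Multiset.mem_map]
  exact Or.inr ⟨(i, a, b), h, rfl⟩

/-- `a` occurs in the sequent `R, X ⊢ Y`. -/
def Occ (a : ℕ) (R : MRel) (X Y : MCtx) : Prop :=
  a ∈ mrelVars R ∨ a ∈ mlabVars X ∨ a ∈ mlabVars Y

lemma fresh_ne_occ {y a : ℕ} {R : MRel} {X Y : MCtx}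
    (hf : MFreshFor y R X Y) (ha : Occ a R X Y) : y ≠ a := by
  obtain ⟨h1, h2, h3⟩ := hf
  rintro rfl
  rcases ha with h | h | h
  · exact h1 h
  · exact h2 h
  · exact h3 h

lemma rot3 {α : Type*} (a b c : α) (s : Multiset α) :
    a ::ₘ b ::ₘ c ::ₘ s = c ::ₘ a ::ₘ b ::ₘ s := by
  rw [Multiset.cons_swap b c, Multiset.cons_swap a c]

lemma rot4 {α : Type*} (a b c d : α) (s : Multiset α) :
    a ::ₘ b ::ₘ c ::ₘ d ::ₘ s = d ::ₘ a ::ₘ b ::ₘ c ::ₘ s := by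
  rw [Multiset.cons_swap c d, Multiset.cons_swap b d, Multiset.cons_swap a d]

set_option maxHeartbeats 1000000 in
/-- Weakening by a relation term whose variables occur in the sequent. -/
lemma weak {D : SDM} {R : MRel} {X Y : MCtx} (h : G3mm D R X Y) :
    ∀ k a b, Occ a R X Y → Occ b R X Y → G3mm D ((k, a, b) ::ₘ R) X Y := by
  induction h with
  | init R0 X0 Y0 x0 p => intro k a b _ _; exact G3mm.init _ _ _ _ _
  | botL R0 X0 Y0 x0 => intro k a b _ _; exact G3mm.botL _ _ _ _
  | @andL R0 X0 Y0 x0 A0 B0 prem ih =>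
      intro k a b ha hb
      refine G3mm.andL (ih k a b ?_ ?_) <;>
        · simp only [Occ, mlab_mem] at ha hb ⊢; tauto
  | @andR R0 X0 Y0 x0 A0 B0 p1 p2 ih1 ih2 =>
      intro k a b ha hb
      refine G3mm.andR (ih1 k a b ?_ ?_) (ih2 k a b ?_ ?_) <;>
        · simp only [Occ, mlab_mem] at ha hb ⊢; tauto
  | @orL R0 X0 Y0 x0 A0 B0 p1 p2 ih1 ih2 =>
      intro k a b ha hb
      refine G3mm.orL (ih1 k a b ?_ ?_) (ih2 k a b ?_ ?_) <;>
        · simp only [Occ, mlab_mem] at ha hb ⊢; tauto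
  | @orR R0 X0 Y0 x0 A0 B0 prem ih =>
      intro k a b ha hb
      refine G3mm.orR (ih k a b ?_ ?_) <;>
        · simp only [Occ, mlab_mem] at ha hb ⊢; tauto
  | @impL R0 X0 Y0 x0 A0 B0 p1 p2 ih1 ih2 =>
      intro k a b ha hb
      refine G3mm.impL (ih1 k a b ?_ ?_) (ih2 k a b ?_ ?_) <;>
        · simp only [Occ, mlab_mem] at ha hb ⊢; tauto
  | @impR R0 X0 Y0 x0 A0 B0 prem ih =>
      intro k a b ha hb
      refine G3mm.impR (ih k a b ?_ ?_) <;>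
        · simp only [Occ, mlab_mem] at ha hb ⊢; tauto
  | @boxL R0 X0 Y0 x0 y0 i0 A0 hi0 prem ih =>
      intro k a b ha hb
      rw [Multiset.cons_swap]
      refine G3mm.boxL hi0 ?_
      rw [Multiset.cons_swap]
      refine ih k a b ?_ ?_ <;>
        · simp only [Occ, mlab_mem, mrel_mem] at ha hb ⊢; tauto
  | @boxR R0 X0 Y0 x0 i0 A0 y0 hi0 hne hf prem ih =>
      intro k a b ha hb
      have hya : y0 ≠ a := by
        rcases ha with h | h | h
        · exact fun hh => hf.1 (hh ▸ h)
        · exact fun hh => hf.2.1 (hh ▸ h)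
        · rw [mlab_mem] at h
          rcases h with rfl | h
          · exact hne
          · exact fun hh => hf.2.2 (hh ▸ h)
      have hyb : y0 ≠ b := by
        rcases hb with h | h | h
        · exact fun hh => hf.1 (hh ▸ h)
        · exact fun hh => hf.2.1 (hh ▸ h)
        · rw [mlab_mem] at h
          rcases h with rfl | h
          · exact hne
          · exact fun hh => hf.2.2 (hh ▸ h)
      refine G3mm.boxR y0 hi0 hne ⟨?_, hf.2.1, hf.2.2⟩ ?_
      · rw [mrel_mem]; push_neg
        exact ⟨hya, hyb, hf.1⟩
      · rw [Multiset.cons_swap]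
        refine ih k a b ?_ ?_ <;>
          · simp only [Occ, mlab_mem, mrel_mem] at ha hb ⊢; tauto
  | @refl R0 X0 Y0 i0 x0 hi0 ht prem ih =>
      intro k a b ha hb
      refine G3mm.refl i0 x0 hi0 ht ?_
      rw [Multiset.cons_swap]
      refine ih k a b ?_ ?_ <;>
        · simp only [Occ, mrel_mem] at ha hb ⊢; tauto
  | @trans R0 X0 Y0 i0 x0 y0 z0 hi0 h4 prem ih =>
      intro k a b ha hb
      rw [← rot3 (i0, x0, y0) (i0, y0, z0) (k, a, b) R0]
      refine G3mm.trans hi0 h4 ?_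
      rw [rot4 (i0, x0, z0) (i0, x0, y0) (i0, y0, z0) (k, a, b) R0]
      refine ih k a b ?_ ?_ <;>
        · simp only [Occ, mrel_mem] at ha hb ⊢; tauto
  | @ser R0 X0 Y0 i0 x0 y0 hi0 hd hne hf prem ih =>
      intro k a b ha hb
      have hya : y0 ≠ a := fresh_ne_occ hf ha
      have hyb : y0 ≠ b := fresh_ne_occ hf hb
      refine G3mm.ser i0 x0 y0 hi0 hd hne ⟨?_, hf.2.1, hf.2.2⟩ ?_
      · rw [mrel_mem]; push_neg
        exact ⟨hya, hyb, hf.1⟩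
      · rw [Multiset.cons_swap]
        refine ih k a b ?_ ?_ <;>
          · simp only [Occ, mrel_mem] at ha hb ⊢; tauto
  | @int R0 X0 Y0 i0 j0 x0 y0 hi0 hj0 hle prem ih =>
      intro k a b ha hb
      rw [Multiset.cons_swap]
      refine G3mm.int hi0 hj0 hle ?_
      rw [rot3]
      refine ih k a b ?_ ?_ <;>
        · simp only [Occ, mrel_mem] at ha hb ⊢; tauto

end TLfour
namespace TLfour

lemma cons_ne_split {a b : ℕ × MForm} {s t : MCtx} (h : a ::ₘ s = b ::ₘ t) (hne : a ≠ b) :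
    ∃ u, s = b ::ₘ u ∧ t = a ::ₘ u := by
  rcases Multiset.cons_eq_cons.mp h with ⟨he, _⟩ | ⟨_, u, h1, h2⟩
  · exact absurd he hne
  · exact ⟨u, h1, h2⟩

set_option maxHeartbeats 1000000 in
/-- The key admissibility: in the presence of `x R_j y` (with `j ⪯ i`, `4 ∈ F(i)`) and
`x : □_i A`, the labelled formula `y : □_i A` can be removed from the antecedent. -/
lemma remove_box {D : SDM} {i j x y : ℕ} {A : MForm} (hi : i ∈ D.N) (hj : j ∈ D.N)
    (hle : D.le j i) (h4 : MAx.four ∈ D.F i) :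
    ∀ {R X' Y}, G3mm D R X' Y →
      ∀ X, X' = (y, MForm.box i A) ::ₘ X → (j, x, y) ∈ R → (x, MForm.box i A) ∈ X →
      G3mm D R X Y := by
  intro R X' Y h
  induction h with
  | init R0 X0 Y0 x0 p =>
      intro X hX hR hx
      obtain ⟨u, h1, h2⟩ := cons_ne_split hX (by simp)
      subst h1 h2
      exact G3mm.init _ _ _ _ _
  | botL R0 X0 Y0 x0 =>
      intro X hX hR hx
      obtain ⟨u, h1, h2⟩ := cons_ne_split hX (by simp)
      subst h1 h2
      exact G3mm.botL _ _ _ _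
  | @andL R0 X0 Y0 x0 A0 B0 prem ih =>
      intro X hX hR hx
      obtain ⟨u, h1, h2⟩ := cons_ne_split hX (by simp)
      subst h1 h2
      have hxu : (x, MForm.box i A) ∈ u := (Multiset.mem_cons.mp hx).resolve_left (by simp)
      exact G3mm.andL (ih ((x0, A0) ::ₘ (x0, B0) ::ₘ u) (rot3 _ _ _ _) hR
        (Multiset.mem_cons_of_mem (Multiset.mem_cons_of_mem hxu)))
  | @andR R0 X0 Y0 x0 A0 B0 p1 p2 ih1 ih2 =>
      intro X hX hR hx
      exact G3mm.andR (ih1 X hX hR hx) (ih2 X hX hR hx)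
  | @orL R0 X0 Y0 x0 A0 B0 p1 p2 ih1 ih2 =>
      intro X hX hR hx
      obtain ⟨u, h1, h2⟩ := cons_ne_split hX (by simp)
      subst h1 h2
      have hxu : (x, MForm.box i A) ∈ u := (Multiset.mem_cons.mp hx).resolve_left (by simp)
      exact G3mm.orL (ih1 ((x0, A0) ::ₘ u) (Multiset.cons_swap _ _ _) hR
          (Multiset.mem_cons_of_mem hxu))
        (ih2 ((x0, B0) ::ₘ u) (Multiset.cons_swap _ _ _) hR (Multiset.mem_cons_of_mem hxu))
  | @orR R0 X0 Y0 x0 A0 B0 prem ih =>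
      intro X hX hR hx
      exact G3mm.orR (ih X hX hR hx)
  | @impL R0 X0 Y0 x0 A0 B0 p1 p2 ih1 ih2 =>
      intro X hX hR hx
      obtain ⟨u, h1, h2⟩ := cons_ne_split hX (by simp)
      subst h1 h2
      have hxu : (x, MForm.box i A) ∈ u := (Multiset.mem_cons.mp hx).resolve_left (by simp)
      exact G3mm.impL (ih1 u rfl hR hxu)
        (ih2 ((x0, B0) ::ₘ u) (Multiset.cons_swap _ _ _) hR (Multiset.mem_cons_of_mem hxu))
  | @impR R0 X0 Y0 x0 A0 B0 prem ih =>
      intro X hX hR hx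
      subst hX
      exact G3mm.impR (ih ((x0, A0) ::ₘ X) (Multiset.cons_swap _ _ _) hR
        (Multiset.mem_cons_of_mem hx))
  | @boxL R0 X0 Y0 x0 y0 i0 A0 hi0 prem ih =>
      intro X hX hR hx
      rcases Multiset.cons_eq_cons.mp hX with ⟨heq, hrest⟩ | ⟨hne, u, h1, h2⟩
      · -- principal case: the removed formula `y : □_i A` is principal
        simp only [Prod.mk.injEq, MForm.box.injEq] at heq
        obtain ⟨rfl, rfl, rfl⟩ := heq
        subst hrest
        -- (names after substitution: y ↦ x0, i ↦ i0, A ↦ A0, X ↦ X0)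
        have star : G3mm D ((i0, x0, y0) ::ₘ R0) ((y0, A0) ::ₘ X0) Y0 :=
          ih ((y0, A0) ::ₘ X0) rfl hR (Multiset.mem_cons_of_mem hx)
        rcases Multiset.mem_cons.mp hR with heq2 | hmem
        · -- the relation x R_j y is the displayed one: then j = i, x = y = z
          simp only [Prod.mk.injEq] at heq2
          obtain ⟨h1, h2, h3⟩ := heq2
          rw [← h3] at star ⊢
          rw [← h2] at star ⊢
          obtain ⟨X1, hX1⟩ : ∃ X1, X0 = (x, MForm.box i0 A0) ::ₘ X1 :=
            ⟨_, (Multiset.cons_erase hx).symm⟩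
          rw [hX1]
          refine G3mm.boxL hi ?_
          rw [Multiset.cons_swap (x, MForm.box i0 A0) (x, A0) X1, ← hX1]
          exact star
        · obtain ⟨R1, hR1⟩ : ∃ R1, R0 = (j, x, x0) ::ₘ R1 :=
            ⟨_, (Multiset.cons_erase hmem).symm⟩
          subst hR1
          have w1 : G3mm D ((i0, x, x0) ::ₘ (i0, x0, y0) ::ₘ (j, x, x0) ::ₘ R1)
              ((y0, A0) ::ₘ X0) Y0 :=
            weak star i0 x x0
              (Or.inr (Or.inl (mlab_of_mem (Multiset.mem_cons_of_mem hx))))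
              (Or.inl (mrel_snd_of_mem
                (Multiset.mem_cons_of_mem (Multiset.mem_cons_self _ _))))
          have w2 : G3mm D
              ((i0, x, y0) ::ₘ (i0, x, x0) ::ₘ (i0, x0, y0) ::ₘ (j, x, x0) ::ₘ R1)
              ((y0, A0) ::ₘ X0) Y0 :=
            weak w1 i0 x y0
              (Or.inr (Or.inl (mlab_of_mem (Multiset.mem_cons_of_mem hx))))
              (Or.inl (mrel_snd_of_mem (Multiset.mem_cons_of_mem
                (Multiset.mem_cons_self _ _))))
          rw [Multiset.cons_swap]
          refine G3mm.int hi hj hle ?_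
          rw [← rot3 (i0, x, x0) (i0, x0, y0) (j, x, x0) R1]
          refine G3mm.trans hi h4 ?_
          obtain ⟨X2, hX2⟩ : ∃ X2, X0 = (x, MForm.box i0 A0) ::ₘ X2 :=
            ⟨_, (Multiset.cons_erase hx).symm⟩
          rw [hX2]
          refine G3mm.boxL hi ?_
          rw [Multiset.cons_swap (x, MForm.box i0 A0) (y0, A0) X2, ← hX2]
          exact w2
      · -- non-principal case
        subst h1 h2
        have hx' : (x, MForm.box i A) ∈ (x0, MForm.box i0 A0) ::ₘ (y0, A0) ::ₘ u := by
          rcases Multiset.mem_cons.mp hx with h | h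
          · exact Multiset.mem_cons.mpr (Or.inl h)
          · exact Multiset.mem_cons_of_mem (Multiset.mem_cons_of_mem h)
        exact G3mm.boxL hi0
          (ih ((x0, MForm.box i0 A0) ::ₘ (y0, A0) ::ₘ u) (rot3 _ _ _ _) hR hx')
  | @boxR R0 X0 Y0 x0 i0 A0 y0 hi0 hne0 hf prem ih =>
      intro X hX hR hx
      subst hX
      refine G3mm.boxR y0 hi0 hne0
        ⟨hf.1, fun hm => hf.2.1 (mlab_mem.mpr (Or.inr hm)), hf.2.2⟩ ?_
      exact ih X rfl (Multiset.mem_cons_of_mem hR) hx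
  | @refl R0 X0 Y0 i0 x0 hi0 ht prem ih =>
      intro X hX hR hx
      exact G3mm.refl i0 x0 hi0 ht (ih X hX (Multiset.mem_cons_of_mem hR) hx)
  | @trans R0 X0 Y0 i0 x0 y0 z0 hi0 h40 prem ih =>
      intro X hX hR hx
      exact G3mm.trans hi0 h40 (ih X hX (Multiset.mem_cons_of_mem hR) hx)
  | @ser R0 X0 Y0 i0 x0 y0 hi0 hd hne0 hf prem ih =>
      intro X hX hR hx
      subst hX
      refine G3mm.ser i0 x0 y0 hi0 hd hne0
        ⟨hf.1, fun hm => hf.2.1 (mlab_mem.mpr (Or.inr hm)), hf.2.2⟩ ?_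
      exact ih X rfl (Multiset.mem_cons_of_mem hR) hx
  | @int R0 X0 Y0 i0 j0 x0 y0 hi0 hj0 hle0 prem ih =>
      intro X hX hR hx
      have hR' : (j, x, y) ∈ (j0, x0, y0) ::ₘ (i0, x0, y0) ::ₘ R0 := by
        rcases Multiset.mem_cons.mp hR with h | h
        · exact Multiset.mem_cons.mpr (Or.inl h)
        · exact Multiset.mem_cons_of_mem (Multiset.mem_cons_of_mem h)
      exact G3mm.int hi0 hj0 hle0 (ih X hX hR' hx)

end TLfour

/-- For `j ⪯ i` with `4 ∈ F(i)`, the rule `TL(4_{ij})` is derivable in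
`G3mm`: if `R, xR_jy, X, x:□_iA, y:□_iA ⊢ Y` is derivable in `G3mm`, then
`R, xR_jy, X, x:□_iA ⊢ Y` is derivable in `G3mm`. -/
theorem G3mm_TL_four_derivable :
    ∀ (D : SDM) (i j : ℕ), i ∈ D.N → j ∈ D.N → D.le j i → MAx.four ∈ D.F i →
      ∀ (R : MRel) (X Y : MCtx) (x y : ℕ) (A : MForm),
        G3mm D ((j, x, y) ::ₘ R) ((x, MForm.box i A) ::ₘ (y, MForm.box i A) ::ₘ X) Y →
        G3mm D ((j, x, y) ::ₘ R) ((x, MForm.box i A) ::ₘ X) Y := by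
  intro D i j hi hj hle h4 R X Y x y A h
  exact TLfour.remove_box hi hj hle h4 h ((x, MForm.box i A) ::ₘ X)
    (Multiset.cons_swap _ _ _) (Multiset.mem_cons_self _ _) (Multiset.mem_cons_self _ _)
end
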